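/- arXiv:1212.1434 — 5 statements merged into one kernel-verified Lean document; each statement's English description precedes it below -/
import Mathlib

section
/- A torsion-free group whose center has finite index is abelian. -/
open Subgroup
open scoped commutatorElement

/-- A monoid is torsion-free if no nontrivial elements have finite order
(the definition removed from Mathlib, restored with its old meaning). -/
def Monoid.IsTorsionFree (G : Type*) [Monoid G] : Prop :=
  ∀ g : G, g ≠ 1 → ¬IsOfFinOrder g

lemma comm_central_aux {G : Type*} [Group G] (a b z w : G)
    (hz : z ∈ Subgroup.center G) (hw : w ∈ Subgroup.center G) :
    ⁅a * z, b * w⁆ = ⁅a, b⁆ := by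
  have cz : ∀ g : G, g * z = z * g := Subgroup.mem_center_iff.mp hz
  have cw : ∀ g : G, g * w = w * g := Subgroup.mem_center_iff.mp hw
  have h1 : ⁅a * z, b * w⁆ = ⁅a, b * w⁆ := by
    simp only [commutatorElement_def]
    calc a * z * (b * w) * (a * z)⁻¹ * (b * w)⁻¹
        = a * (z * (b * w)) * (z⁻¹ * a⁻¹) * (b * w)⁻¹ := by group
      _ = a * ((b * w) * z) * (z⁻¹ * a⁻¹) * (b * w)⁻¹ := by rw [cz (b * w)]
      _ = a * (b * w) * a⁻¹ * (b * w)⁻¹ := by group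
  have h2 : ⁅a, b * w⁆ = ⁅a, b⁆ := by
    simp only [commutatorElement_def]
    calc a * (b * w) * a⁻¹ * (b * w)⁻¹
        = a * b * (w * a⁻¹) * (w⁻¹ * b⁻¹) := by group
      _ = a * b * (a⁻¹ * w) * (w⁻¹ * b⁻¹) := by rw [← cw a⁻¹]
      _ = a * b * a⁻¹ * b⁻¹ := by group
  rw [h1, h2]

/-- A torsion-free group whose center has finite index is abelian. -/
theorem stmt3 {G : Type*} [Group G] (htf : Monoid.IsTorsionFree G)
    (hZ : (Subgroup.center G).FiniteIndex) :
    ∀ a b : G, a * b = b * a := by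
  haveI := hZ
  haveI : Finite (G ⧸ center G) := Subgroup.finite_quotient_of_finiteIndex
  -- commutator depends only on cosets mod center
  let F : G ⧸ center G → G ⧸ center G → G := fun x y =>
    Quotient.liftOn₂ x y (fun a b => ⁅a, b⁆) (by
      intro a b a' b' ha hb
      replace ha := QuotientGroup.leftRel_apply.mp ha
      replace hb := QuotientGroup.leftRel_apply.mp hb
      have : a' = a * (a⁻¹ * a') := by group
      have hb' : b' = b * (b⁻¹ * b') := by group
      rw [this, hb']
      exact (comm_central_aux a b _ _ ha hb).symm)
  haveI : Finite (commutatorSet G) := by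
    have hsub : commutatorSet G ⊆
        Set.range (fun p : (G ⧸ center G) × (G ⧸ center G) => F p.1 p.2) := by
      rintro _ ⟨a, b, rfl⟩
      exact ⟨(↑a, ↑b), rfl⟩
    exact ((Set.finite_range _).subset hsub).to_subtype
  haveI : Finite (_root_.commutator G) := inferInstance
  intro a b
  have hmem : ⁅a, b⁆ ∈ _root_.commutator G :=
    Subgroup.commutator_mem_commutator (mem_top a) (mem_top b)
  have hfo : IsOfFinOrder (⁅a, b⁆) := by
    have : IsOfFinOrder (⟨⁅a, b⁆, hmem⟩ : _root_.commutator G) :=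
      isOfFinOrder_of_finite _
    exact Submonoid.isOfFinOrder_coe.mpr this
  have := htf ⁅a, b⁆
  by_cases h : ⁅a, b⁆ = 1
  · exact commutatorElement_eq_one_iff_mul_comm.mp h
  · exact absurd hfo (this h)
end

section
/- Every torsion-free virtually cyclic group is cyclic (i.e., trivial or infinite cyclic). -/
open Subgroup

/-- A group embedding into a cyclic group is cyclic. -/
lemma aux_isCyclic_of_injective {G H : Type*} [Group G] [Group H] [IsCyclic H]
    (f : G →* H) (hf : Function.Injective f) : IsCyclic G :=
  isCyclic_of_surjective (MonoidHom.ofInjective hf).symm (MulEquiv.surjective _)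

/-- In a torsion-free group, `g ^ n = 1` with `n ≠ 0` forces `g = 1`. -/
lemma aux_eq_one_of_pow {G : Type*} [Group G] (htf : ∀ g : G, g ≠ 1 → ¬IsOfFinOrder g)
    {g : G} {n : ℕ} (hn : n ≠ 0) (h : g ^ n = 1) : g = 1 := by
  by_contra hg
  exact htf g hg (isOfFinOrder_iff_pow_eq_one.mpr ⟨n, Nat.pos_of_ne_zero hn, h⟩)

/-- A torsion-free virtually cyclic group is trivial or infinite cyclic. -/
theorem stmt5 {G : Type*} [Group G] (htf : ∀ g : G, g ≠ 1 → ¬IsOfFinOrder g)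
    (hvc : ∃ C : Subgroup G, IsCyclic C ∧ C.FiniteIndex) :
    Subsingleton G ∨ Nonempty (G ≃* Multiplicative ℤ) := by
  obtain ⟨C, hCcyc, hCfi⟩ := hvc
  haveI := hCcyc
  haveI := hCfi
  rcases finite_or_infinite G with hfin | hinf
  · -- finite torsion-free group is trivial
    left
    refine ⟨fun a b => ?_⟩
    have h1 : ∀ g : G, g = 1 := fun g => by
      by_contra hg
      exact htf g hg (isOfFinOrder_of_finite g)
    rw [h1 a, h1 b]
  · right
    -- pass to the normal core N of C : normal, cyclic, of finite index, infinite
    set N := C.normalCore with hN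
    haveI hNnorm : N.Normal := C.normalCore_normal
    haveI hNfi : N.FiniteIndex := inferInstance
    haveI hNcyc : IsCyclic N := Subgroup.isCyclic_of_le C.normalCore_le
    have hidx : N.index ≠ 0 := hNfi.index_ne_zero
    haveI hNinf : Infinite N := by
      have hcard : Nat.card N * N.index = Nat.card G := N.card_mul_index
      have hg0 : Nat.card G = 0 := @Nat.card_eq_zero_of_infinite G _
      rw [hg0] at hcard
      rcases Nat.mul_eq_zero.mp hcard with h | h
      · rcases Nat.card_eq_zero.mp h with h' | h'
        · exact h'.elim (1 : N)
        · exact h'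
      · exact absurd h hidx
    -- a generator z of N
    obtain ⟨⟨z, hzN⟩, hgen⟩ := IsCyclic.exists_generator (α := N)
    have hNz : N = Subgroup.zpowers z := by
      apply le_antisymm
      · intro x hx
        obtain ⟨k, hk⟩ := hgen ⟨x, hx⟩
        exact ⟨k, by simpa using congrArg Subtype.val hk⟩
      · exact Subgroup.zpowers_le.mpr hzN
    have hz_inf : ¬ IsOfFinOrder z := by
      intro h
      have h1 : ((Subgroup.zpowers z : Subgroup G) : Set G).Finite := h.finite_zpowers
      rw [← hNz] at h1
      haveI := h1.to_subtype
      exact not_finite N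
    have hz_inj : Function.Injective (fun k : ℤ => z ^ k) :=
      injective_zpow_iff_not_isOfFinOrder.mpr hz_inf
    -- z is central in G
    have hcen : ∀ g : G, g * z * g⁻¹ = z := by
      intro g
      have h1 : g * z * g⁻¹ ∈ N := hNnorm.conj_mem z hzN g
      have h2 : g⁻¹ * z * g ∈ N := by simpa using hNnorm.conj_mem z hzN g⁻¹
      rw [hNz] at h1 h2
      obtain ⟨k, hk⟩ := Subgroup.mem_zpowers_iff.mp h1
      obtain ⟨m, hm⟩ := Subgroup.mem_zpowers_iff.mp h2
      have hkm : z ^ (k * m) = z ^ (1 : ℤ) := by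
        have e1 : g * z ^ m * g⁻¹ = z := by rw [hm]; group
        have e2 : g * z ^ m * g⁻¹ = z ^ (k * m) := by
          have h3 : g * z ^ m * g⁻¹ = (g * z * g⁻¹) ^ m := by rw [conj_zpow]
          rw [h3, ← hk, ← zpow_mul]
        rw [zpow_one, ← e2]
        exact e1
      have hkm1 : k * m = 1 := hz_inj hkm
      rcases Int.eq_one_or_neg_one_of_mul_eq_one hkm1 with h1' | h1'
      · rw [← hk, h1', zpow_one]
      · -- the orientation-reversing case is impossible in a torsion-free group
        exfalso
        subst h1'
        have hq : (g ^ 2) ^ N.index ∈ Subgroup.zpowers z := by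
          rw [← hNz]; exact N.pow_index_mem (g ^ 2)
        obtain ⟨q, hqz⟩ := Subgroup.mem_zpowers_iff.mp hq
        have e3 : g * ((g ^ 2) ^ N.index) * g⁻¹ = (g ^ 2) ^ N.index := by group
        have e4 : g * z ^ q * g⁻¹ = z ^ (-q) := by
          have : g * z ^ q * g⁻¹ = (g * z * g⁻¹) ^ q := by rw [conj_zpow]
          rw [this, ← hk, ← zpow_mul, neg_one_mul]
        have e5 : z ^ q = z ^ (-q) := by
          rw [← e4, hqz, e3, ← hqz]
        have hq0 : q = 0 := by
          have := hz_inj e5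
          omega
        have hg1 : g = 1 := by
          apply aux_eq_one_of_pow htf (n := 2 * N.index) (by positivity)
          rw [pow_mul, ← hqz, hq0, zpow_zero]
        have : (-1 : ℤ) = 1 := hz_inj (show z ^ (-1 : ℤ) = z ^ (1 : ℤ) by
          rw [hk, hg1]; group)
        omega
    have hzc : z ∈ Subgroup.center G := by
      rw [Subgroup.mem_center_iff]
      intro g
      have := hcen g
      rwa [mul_inv_eq_iff_eq_mul] at this
    have hNle : N ≤ Subgroup.center G := by
      rw [hNz]; exact Subgroup.zpowers_le.mpr hzc
    haveI hZfi : (Subgroup.center G).FiniteIndex := by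
      refine ⟨fun h0 => hidx ?_⟩
      have := Subgroup.index_dvd_of_le hNle
      rw [h0] at this
      exact zero_dvd_iff.mp this
    -- the transfer homomorphism G →* center G is injective
    have hZidx : (Subgroup.center G).index ≠ 0 := hZfi.index_ne_zero
    have hTinj : Function.Injective (MonoidHom.transferCenterPow G) := by
      refine (injective_iff_map_eq_one _).mpr fun g hg => ?_
      have : (g : G) ^ (Subgroup.center G).index = 1 := by
        have := congrArg (Subtype.val) hg
        rwa [MonoidHom.transferCenterPow_apply] at this
      exact aux_eq_one_of_pow htf hZidx this
    -- the power map from the center into `N.subgroupOf (center G)` is injective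
    set M := N.subgroupOf (Subgroup.center G) with hM
    haveI : IsCyclic M := by
      have e := Subgroup.subgroupOfEquivOfLe hNle
      exact isCyclic_of_surjective e.symm e.symm.surjective
    have hMidx : M.index ≠ 0 := by
      intro h0
      apply hidx
      have h2 := Subgroup.relIndex_mul_index hNle
      have : N.relIndex (Subgroup.center G) = M.index := rfl
      rw [this, h0, zero_mul] at h2
      exact h2.symm
    let φ : ↥(Subgroup.center G) →* ↥M :=
      { toFun := fun x => ⟨x ^ M.index, M.pow_index_mem x⟩
        map_one' := by ext; simp
        map_mul' := fun a b => by ext; simp [mul_pow]; exact Commute.mul_pow (Subgroup.mem_center_iff.mp b.2 ↑a) _ }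
    have hφinj : Function.Injective φ := by
      refine (injective_iff_map_eq_one _).mpr fun a ha => ?_
      have h1 : a ^ M.index = 1 := by
        simpa [φ, Subtype.ext_iff] using congrArg Subtype.val ha
      have h2 : (a : G) ^ M.index = 1 := by
        simpa using congrArg Subtype.val h1
      exact Subtype.ext (aux_eq_one_of_pow htf hMidx h2)
    -- hence G is cyclic and infinite, so isomorphic to ℤ
    haveI hGcyc : IsCyclic G :=
      aux_isCyclic_of_injective (φ.comp (MonoidHom.transferCenterPow G)) (hφinj.comp hTinj)
    obtain ⟨g, hg⟩ := IsCyclic.exists_generator (α := G)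
    have hg_inf : ¬ IsOfFinOrder g := by
      intro h
      have h1 : (Set.univ : Set G).Finite := h.finite_zpowers.subset fun x _ => hg x
      exact Set.infinite_univ h1
    have hinj : Function.Injective (zpowersHom G g) := by
      intro a b hab
      have h1 : g ^ (Multiplicative.toAdd a) = g ^ (Multiplicative.toAdd b) := hab
      exact (injective_zpow_iff_not_isOfFinOrder.mpr hg_inf) h1
    have hsurj : Function.Surjective (zpowersHom G g) := fun x => by
      obtain ⟨k, hk⟩ := Subgroup.mem_zpowers_iff.mp (hg x)
      exact ⟨Multiplicative.ofAdd k, hk⟩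
    exact ⟨(MulEquiv.ofBijective (zpowersHom G g) ⟨hinj, hsurj⟩).symm⟩
end

section
/- The outer automorphism group of a virtually cyclic group is finite. -/
open Subgroup

private lemma aux_fin_subgroups {G : Type*} [Group G] (S : Set G) (hSfin : S.Finite)
    (hStop : Subgroup.closure S = ⊤) (n : ℕ) (hn : n ≠ 0) :
    Finite {H : Subgroup G // H.index = n} := by
  classical
  have hSf : Finite S := hSfin
  have hfin : ∀ H : {H : Subgroup G // H.index = n}, Finite (G ⧸ H.1) := by
    intro H
    have hc : Nat.card (G ⧸ H.1) = n := by rw [← Subgroup.index_eq_card, H.2]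
    exact Nat.finite_of_card_ne_zero (by rw [hc]; exact hn)
  have hcard : ∀ H : {H : Subgroup G // H.index = n}, Nonempty ((G ⧸ H.1) ≃ Fin n) := by
    intro H
    have := hfin H
    have : Fintype (G ⧸ H.1) := Fintype.ofFinite _
    exact ⟨Fintype.equivFinOfCardEq
      (by rw [← Nat.card_eq_fintype_card, ← Subgroup.index_eq_card, H.2])⟩
  let e : ∀ H : {H : Subgroup G // H.index = n}, (G ⧸ H.1) ≃ Fin n := fun H => (hcard H).some
  let f : ∀ H : {H : Subgroup G // H.index = n}, G →* Equiv.Perm (Fin n) := fun H =>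
    { toFun := fun g => ((e H).symm.trans (MulAction.toPerm g)).trans (e H)
      map_one' := by ext x; simp
      map_mul' := by intro a b; ext x; simp [mul_smul] }
  have hinj : Function.Injective (fun H : {H : Subgroup G // H.index = n} =>
      ((fun s : S => f H s), e H ((1 : G) : G ⧸ H.1))) := by
    intro H1 H2 h
    have h1 : (fun s : S => f H1 s) = fun s : S => f H2 s := congrArg Prod.fst h
    have h2 : e H1 ((1 : G) : G ⧸ H1.1) = e H2 ((1 : G) : G ⧸ H2.1) := congrArg Prod.snd h
    have hf : f H1 = f H2 :=
      MonoidHom.eq_of_eqOn_dense hStop (fun s hs => congrFun h1 ⟨s, hs⟩)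
    refine Subtype.ext ?_
    ext g
    have k : ∀ H : {H : Subgroup G // H.index = n}, ∀ g : G,
        (g ∈ H.1 ↔ f H g (e H ((1 : G) : G ⧸ H.1)) = e H ((1 : G) : G ⧸ H.1)) := by
      intro H g
      have hst := SetLike.ext_iff.mp (MulAction.stabilizer_quotient H.1) g
      rw [← hst, MulAction.mem_stabilizer_iff]
      constructor
      · intro hg; simp [f, hg]
      · intro hg
        exact (e H).injective (by simpa [f] using hg)
    rw [k H1 g, k H2 g, hf, h2]
  exact Finite.of_injective _ hinj


open Pointwise in
private lemma index_smul' {G : Type*} [Group G] (e : MulAut G) (C : Subgroup G) :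
    (e • C).index = C.index := by
  rw [Subgroup.pointwise_smul_def]
  erw [Subgroup.index_map]
  have h1 : (MulDistribMulAction.toMonoidEnd (MulAut G) G e).ker = ⊥ := by
    ext x; simp [MonoidHom.mem_ker]
  have h2 : (MulDistribMulAction.toMonoidEnd (MulAut G) G e).range = ⊤ := by
    erw [MonoidHom.range_eq_top]
    intro x; exact ⟨e⁻¹ x, by simp⟩
  erw [h1, h2]
  simp


private lemma aux_fg {ι : Type*} [Finite ι] (V : Subgroup (Multiplicative (ι → ℤ))) :
    Group.FG ↥V := by
  classical
  let W : AddSubgroup (ι → ℤ) := Subgroup.toAddSubgroup' V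
  have hWfg : (AddSubgroup.toIntSubmodule W).FG := IsNoetherian.noetherian _
  have h1 : Module.Finite ℤ ↥(AddSubgroup.toIntSubmodule W) := Module.Finite.iff_fg.mpr hWfg
  have h2 : AddGroup.FG ↥(AddSubgroup.toIntSubmodule W) := Module.Finite.iff_addGroup_fg.mp h1
  have h3 : AddGroup.FG ↥W := by
    let e : ↥(AddSubgroup.toIntSubmodule W) ≃+ ↥W :=
      { toFun := fun x => ⟨x.1, x.2⟩
        invFun := fun x => ⟨x.1, x.2⟩
        left_inv := fun x => rfl
        right_inv := fun x => rfl
        map_add' := fun x y => rfl }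
    exact AddGroup.fg_of_surjective (f := e.toAddMonoidHom) e.surjective
  have h4 : Group.FG (Multiplicative ↥W) := Group.fg_of_mul_group_fg
  let e2 : Multiplicative ↥W ≃* ↥V :=
    { toFun := fun x => ⟨Multiplicative.ofAdd (Multiplicative.toAdd x).1, (Multiplicative.toAdd x).2⟩
      invFun := fun v => Multiplicative.ofAdd ⟨Multiplicative.toAdd v.1, v.2⟩
      left_inv := fun x => rfl
      right_inv := fun v => rfl
      map_mul' := fun x y => rfl }
  exact Group.fg_of_surjective (f := e2.toMonoidHom) e2.surjective


section Core
variable {G : Type*} [Group G]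

private lemma aux_core (K : Subgroup G) [K.Normal] [hKfi : K.FiniteIndex]
    (z : G) (hzK : Subgroup.zpowers z = K) (hz : ¬ IsOfFinOrder z)
    (A : Subgroup (MulAut G)) [hAfi : A.FiniteIndex]
    (hA : ∀ φ : MulAut G, φ ∈ A → ∀ x : G, x ∈ K → φ x ∈ K) :
    (MulAut.conj : G →* MulAut G).range.FiniteIndex := by
  classical
  set R := (MulAut.conj : G →* MulAut G).range with hR
  have hzinj : Function.Injective (fun t : ℤ => z ^ t) :=
    injective_zpow_iff_not_isOfFinOrder.mpr hz
  have hmemK : ∀ x : G, x ∈ K ↔ ∃ t : ℤ, z ^ t = x := by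
    intro x; rw [← hzK]; exact Subgroup.mem_zpowers_iff
  have hzmem : z ∈ K := by rw [← hzK]; exact Subgroup.mem_zpowers z
  -- generator dichotomy
  have hgen : ∀ w : G, Subgroup.zpowers w = K → w = z ∨ w = z⁻¹ := by
    intro w hw
    have hwK : w ∈ K := by rw [← hw]; exact Subgroup.mem_zpowers w
    obtain ⟨a, ha⟩ := (hmemK w).mp hwK
    have hzw : z ∈ Subgroup.zpowers w := by rw [hw]; exact hzmem
    obtain ⟨b, hb⟩ := Subgroup.mem_zpowers_iff.mp hzw
    have : z ^ (a * b) = z ^ (1 : ℤ) := by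
      rw [zpow_mul, ha, hb, zpow_one]
    have hab : a * b = 1 := hzinj this
    rcases Int.eq_one_or_neg_one_of_mul_eq_one hab with h1 | h1
    · left; rw [← ha, h1, zpow_one]
    · right; rw [← ha, h1, zpow_neg, zpow_one]
  -- conjugation of K
  have hmapK : ∀ e : MulAut G, (∀ x ∈ K, e x ∈ K) → (∀ x ∈ K, e⁻¹ x ∈ K) →
      K.map e.toMonoidHom = K := by
    intro e he hei
    apply le_antisymm
    · rintro x ⟨y, hy, rfl⟩; exact he y hy
    · intro x hx
      exact ⟨e⁻¹ x, hei x hx, e.apply_symm_apply x⟩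
  have hgen' : ∀ e : MulAut G, K.map e.toMonoidHom = K → e z = z ∨ e z = z⁻¹ := by
    intro e he
    apply hgen
    rw [← he, ← hzK, MonoidHom.map_zpowers]
    rfl
  -- ε with defining property
  have hεex : ∀ g : G, ∃ u : ℤˣ, g⁻¹ * z * g = z ^ (u : ℤ) := by
    intro g
    have hmap : K.map (MulAut.conj g⁻¹).toMonoidHom = K := by
      apply hmapK
      · intro x hx
        simpa using (‹K.Normal›.conj_mem x hx g⁻¹)
      · intro x hx
        simpa using (‹K.Normal›.conj_mem x hx (g⁻¹)⁻¹)
    rcases hgen' _ hmap with h | h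
    · exact ⟨1, by simpa [MulAut.conj_apply] using h⟩
    · exact ⟨-1, by simpa [MulAut.conj_apply] using h⟩
  choose ε hε using hεex
  have hconjz : ∀ (h : G) (n : ℤ), h⁻¹ * z ^ n * h = (h⁻¹ * z * h) ^ n := by
    intro h n
    have := conj_zpow (i := n) (a := h⁻¹) (b := z)
    simpa [inv_inv] using this.symm
  have hεmul : ∀ g h : G, ε (g * h) = ε g * ε h := by
    intro g h
    refine Units.ext (hzinj ?_)
    show z ^ ((ε (g*h) : ℤ)) = z ^ (((ε g * ε h : ℤˣ) : ℤ))
    rw [← hε (g*h)]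
    calc (g*h)⁻¹ * z * (g*h) = h⁻¹ * (g⁻¹ * z * g) * h := by group
      _ = h⁻¹ * z ^ (ε g : ℤ) * h := by rw [hε g]
      _ = (h⁻¹ * z * h) ^ (ε g : ℤ) := hconjz h _
      _ = (z ^ (ε h : ℤ)) ^ (ε g : ℤ) := by rw [hε h]
      _ = z ^ (((ε g * ε h : ℤˣ) : ℤ)) := by
          rw [← zpow_mul, Units.val_mul, mul_comm]
  have hεone : ε 1 = 1 := by
    refine Units.ext (hzinj ?_)
    show z ^ ((ε 1 : ℤ)) = z ^ ((1:ℤˣ) : ℤ)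
    rw [← hε 1]; simp
  have hεcoset : ∀ (g : G) (t : ℤ), ε (g * z ^ t) = ε g := by
    intro g t
    refine Units.ext (hzinj ?_)
    show z ^ ((ε (g * z ^ t) : ℤ)) = z ^ ((ε g : ℤ))
    rw [← hε (g * z ^ t)]
    calc (g * z ^ t)⁻¹ * z * (g * z ^ t)
        = z ^ (-t) * (g⁻¹ * z * g) * z ^ t := by group
      _ = z ^ (-t) * z ^ (ε g : ℤ) * z ^ t := by rw [hε g]
      _ = z ^ (-t + ((ε g : ℤ) + t)) := by rw [zpow_add, zpow_add, mul_assoc]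
      _ = z ^ ((ε g : ℤ)) := by ring_nf
  -- finite quotient
  haveI hQfin : Finite (G ⧸ K) := by
    refine Nat.finite_of_card_ne_zero ?_
    rw [← Subgroup.index_eq_card]
    exact hKfi.index_ne_zero
  have hmapA : ∀ φ : MulAut G, φ ∈ A → K.map φ.toMonoidHom = K := fun φ hφ =>
    hmapK φ (hA φ hφ) (hA φ⁻¹ (inv_mem hφ))
  -- permutation representation on the quotient
  let πhom : ↥A →* Equiv.Perm (G ⧸ K) :=
    { toFun := fun φ => (QuotientGroup.congr K K φ.1 (hmapA φ.1 φ.2)).toEquiv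
      map_one' := by
        ext q
        induction q using QuotientGroup.induction_on with
        | _ g => simp [QuotientGroup.congr_mk]
      map_mul' := by
        intro φ ψ
        ext q
        induction q using QuotientGroup.induction_on with
        | _ g => simp [QuotientGroup.congr_mk]; rfl }
  have hπ : ∀ (φ : ↥A) (g : G), πhom φ (QuotientGroup.mk g) = QuotientGroup.mk (φ.1 g) := by
    intro φ g
    exact QuotientGroup.congr_mk K K φ.1 (hmapA φ.1 φ.2) g
  -- sign representation
  have hρex : ∀ φ : ↥A, ∃ u : ℤˣ, φ.1 z = z ^ (u : ℤ) := by
    intro φ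
    rcases hgen' φ.1 (hmapA φ.1 φ.2) with h | h
    · exact ⟨1, by simpa using h⟩
    · exact ⟨-1, by simpa using h⟩
  choose ρ hρ using hρex
  have ρmul : ∀ φ ψ : ↥A, ρ (φ * ψ) = ρ φ * ρ ψ := by
    intro φ ψ
    refine Units.ext (hzinj ?_)
    show z ^ ((ρ (φ * ψ) : ℤ)) = z ^ ((ρ φ * ρ ψ : ℤˣ) : ℤ)
    rw [← hρ (φ * ψ)]
    have : (φ * ψ).1 z = φ.1 (ψ.1 z) := rfl
    rw [this, hρ ψ, map_zpow, hρ φ, ← zpow_mul, Units.val_mul, mul_comm]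
  let ρhom : ↥A →* ℤˣ := MonoidHom.mk' ρ ρmul
  let Φ : ↥A →* ℤˣ × Equiv.Perm (G ⧸ K) := ρhom.prod πhom
  haveI hkerfi : Φ.ker.FiniteIndex := Subgroup.finiteIndex_ker Φ
  -- the subgroup N
  let N : Subgroup (MulAut G) := Subgroup.map A.subtype Φ.ker
  have hNle : N ≤ A := by
    rintro x ⟨ψ, hψ, rfl⟩; exact ψ.2
  have hNmem : ∀ φ : MulAut G, φ ∈ N ↔
      (φ ∈ A ∧ φ z = z ∧ ∀ g : G, g⁻¹ * φ g ∈ K) := by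
    intro φ
    constructor
    · rintro ⟨ψ, hψ, rfl⟩
      have hψ1 : ρhom ψ = 1 := by
        have := congrArg Prod.fst (MonoidHom.mem_ker.mp hψ)
        simpa [Φ] using this
      have hψ2 : πhom ψ = 1 := by
        have := congrArg Prod.snd (MonoidHom.mem_ker.mp hψ)
        simpa [Φ] using this
      refine ⟨ψ.2, ?_, ?_⟩
      · have : ρ ψ = 1 := hψ1
        have h2 := hρ ψ
        rw [this] at h2
        simpa using h2
      · intro g
        have h3 : πhom ψ (QuotientGroup.mk g) = QuotientGroup.mk g := by rw [hψ2]; rfl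
        rw [hπ ψ g] at h3
        have h4 := QuotientGroup.eq.mp h3
        simpa using inv_mem h4
    · rintro ⟨hφA, hφz, hφK⟩
      refine ⟨⟨φ, hφA⟩, ?_, rfl⟩
      show ⟨φ, hφA⟩ ∈ Φ.ker
      rw [MonoidHom.mem_ker]
      have e1 : ρhom ⟨φ, hφA⟩ = 1 := by
        refine Units.ext (hzinj ?_)
        show z ^ ((ρ ⟨φ, hφA⟩ : ℤ)) = z ^ ((1:ℤˣ) : ℤ)
        rw [← hρ ⟨φ, hφA⟩]
        simpa using hφz
      have e2 : πhom ⟨φ, hφA⟩ = 1 := by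
        ext q
        induction q using QuotientGroup.induction_on with
        | _ g =>
          rw [hπ]
          show QuotientGroup.mk (φ g) = QuotientGroup.mk g
          rw [QuotientGroup.eq]
          simpa using inv_mem (hφK g)
      have : Φ ⟨φ, hφA⟩ = (ρhom ⟨φ, hφA⟩, πhom ⟨φ, hφA⟩) := rfl
      rw [this, e1, e2]
      rfl
  have hNsub : N.subgroupOf A = Φ.ker := by
    rw [Subgroup.subgroupOf, Subgroup.comap_map_eq_self_of_injective A.subtype_injective]
  haveI hNfi : N.FiniteIndex := by
    constructor
    rw [← Subgroup.relIndex_mul_index hNle]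
    apply Nat.mul_ne_zero
    · show (N.subgroupOf A).index ≠ 0
      rw [hNsub]
      exact hkerfi.index_ne_zero
    · exact hAfi.index_ne_zero
  -- discrete logarithm in K
  have hdl : ∀ x : G, ∃ t : ℤ, x ∈ K → z ^ t = x := by
    intro x
    by_cases h : x ∈ K
    · obtain ⟨t, ht⟩ := (hmemK x).mp h
      exact ⟨t, fun _ => ht⟩
    · exact ⟨0, fun hx => absurd hx h⟩
  choose dlog hdlog using hdl
  set d : MulAut G → G → ℤ := fun φ g => dlog (g⁻¹ * φ g) with hd
  have hcancel : ∀ (g : G) (s t : ℤ), g * z ^ s = g * z ^ t → s = t := by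
    intro g s t h
    exact hzinj (mul_left_cancel h)
  have hdspec : ∀ φ : MulAut G, φ ∈ N → ∀ g : G, φ g = g * z ^ (d φ g) := by
    intro φ hφ g
    have h1 := hdlog (g⁻¹ * φ g) (((hNmem φ).mp hφ).2.2 g)
    rw [hd]
    rw [h1]
    group
  -- cocycle identity
  have hcoc : ∀ φ : MulAut G, φ ∈ N → ∀ g h : G,
      d φ (g * h) = (ε h : ℤ) * d φ g + d φ h := by
    intro φ hφ g h
    have key : φ (g * h) = (g * h) * z ^ ((ε h : ℤ) * d φ g + d φ h) := by
      rw [map_mul, hdspec φ hφ g, hdspec φ hφ h]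
      calc g * z ^ d φ g * (h * z ^ d φ h)
          = (g * h) * (h⁻¹ * z ^ (d φ g) * h) * z ^ (d φ h) := by group
        _ = (g * h) * ((h⁻¹ * z * h) ^ (d φ g)) * z ^ (d φ h) := by rw [hconjz]
        _ = (g * h) * ((z ^ (ε h : ℤ)) ^ (d φ g)) * z ^ (d φ h) := by rw [hε h]
        _ = (g * h) * z ^ ((ε h : ℤ) * d φ g + d φ h) := by
            rw [← zpow_mul, mul_assoc, ← zpow_add]
    exact hcancel _ _ _ ((hdspec φ hφ (g * h)).symm.trans key)
  -- coset invariance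
  have hdQ : ∀ φ : MulAut G, φ ∈ N → ∀ g₁ g₂ : G,
      (QuotientGroup.mk g₁ : G ⧸ K) = QuotientGroup.mk g₂ → d φ g₁ = d φ g₂ := by
    intro φ hφ g₁ g₂ hg
    have h1 : g₁⁻¹ * g₂ ∈ K := QuotientGroup.eq.mp hg
    obtain ⟨t, ht⟩ := (hmemK _).mp h1
    have hg2 : g₂ = g₁ * z ^ t := by rw [ht]; group
    subst hg2
    have hφz : φ z = z := ((hNmem φ).mp hφ).2.1
    have key : φ (g₁ * z ^ t) = (g₁ * z ^ t) * z ^ (d φ g₁) := by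
      rw [map_mul, map_zpow, hφz, hdspec φ hφ g₁]
      calc g₁ * z ^ d φ g₁ * z ^ t = g₁ * z ^ (d φ g₁ + t) := by rw [mul_assoc, ← zpow_add]
        _ = g₁ * z ^ (t + d φ g₁) := by rw [add_comm]
        _ = (g₁ * z ^ t) * z ^ (d φ g₁) := by rw [zpow_add, mul_assoc]
    exact (hcancel _ _ _ ((hdspec φ hφ (g₁ * z ^ t)).symm.trans key)).symm
  -- additivity in φ
  have hdadd : ∀ φ ψ : MulAut G, φ ∈ N → ψ ∈ N → ∀ g : G,
      d (φ * ψ) g = d φ g + d ψ g := by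
    intro φ ψ hφ hψ g
    have hφz : φ z = z := ((hNmem φ).mp hφ).2.1
    have key : (φ * ψ) g = g * z ^ (d φ g + d ψ g) := by
      have : (φ * ψ) g = φ (ψ g) := rfl
      rw [this, hdspec ψ hψ g, map_mul, map_zpow, hφz, hdspec φ hφ g, mul_assoc, ← zpow_add]
    exact hcancel _ _ _ ((hdspec (φ * ψ) (mul_mem hφ hψ) g).symm.trans key)
  -- commutativity of N
  have hNcomm : ∀ φ ψ : MulAut G, φ ∈ N → ψ ∈ N → φ * ψ = ψ * φ := by
    intro φ ψ hφ hψ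
    ext g
    rw [hdspec (φ * ψ) (mul_mem hφ hψ) g, hdspec (ψ * φ) (mul_mem hψ hφ) g,
      hdadd φ ψ hφ hψ g, hdadd ψ φ hψ hφ g, add_comm]
  -- summation
  haveI : Fintype (G ⧸ K) := Fintype.ofFinite _
  set m := K.index with hmdef
  have hm : m ≠ 0 := hKfi.index_ne_zero
  have hmcard : m = Fintype.card (G ⧸ K) := by
    rw [hmdef, Subgroup.index_eq_card, Nat.card_eq_fintype_card]
  set a : MulAut G → ℤ := fun φ => ∑ q : G ⧸ K, d φ q.out with ha
  have hsum : ∀ φ : MulAut G, φ ∈ N → ∀ g : G,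
      (m : ℤ) * d φ g = a φ - (ε g : ℤ) * a φ := by
    intro φ hφ g
    have e1 : a φ = ∑ q : G ⧸ K, d φ ((q * QuotientGroup.mk g).out) := by
      rw [ha]
      exact (Fintype.sum_equiv (Equiv.mulRight (QuotientGroup.mk g : G ⧸ K))
        (fun q => d φ ((q * QuotientGroup.mk g).out)) (fun q => d φ q.out)
        (fun q => rfl)).symm
    have e2 : ∀ q : G ⧸ K, d φ ((q * QuotientGroup.mk g).out) = d φ (q.out * g) := by
      intro q
      apply hdQ φ hφ
      rw [QuotientGroup.out_eq']
      rw [show (QuotientGroup.mk (q.out * g) : G ⧸ K) = QuotientGroup.mk q.out * QuotientGroup.mk g from rfl]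
      rw [QuotientGroup.out_eq']
    have e3 : ∀ q : G ⧸ K, d φ (q.out * g) = (ε g : ℤ) * d φ q.out + d φ g := fun q => hcoc φ hφ _ _
    have e4 : a φ = (ε g : ℤ) * a φ + (m : ℤ) * d φ g := by
      calc a φ = ∑ q : G ⧸ K, d φ ((q * QuotientGroup.mk g).out) := e1
        _ = ∑ q : G ⧸ K, ((ε g : ℤ) * d φ q.out + d φ g) := by
            refine Finset.sum_congr rfl fun q _ => ?_
            rw [e2 q, e3 q]
        _ = (ε g : ℤ) * a φ + (m : ℤ) * d φ g := by
            rw [Finset.sum_add_distrib, ← Finset.mul_sum, Finset.sum_const, Finset.card_univ,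
              nsmul_eq_mul, hmcard]
    omega
  -- power formula
  have hpow : ∀ φ : MulAut G, φ ∈ N → ∀ j : ℕ, ∀ g : G,
      (φ ^ j) g = g * z ^ ((j : ℤ) * d φ g) := by
    intro φ hφ j
    induction j with
    | zero => intro g; simp
    | succ j ih =>
      intro g
      have h1 : φ ^ (j + 1) = φ ^ j * φ := by rw [pow_succ]
      have hφz : φ z = z := ((hNmem φ).mp hφ).2.1
      have hφjz : (φ ^ j) z = z := ((hNmem _).mp (pow_mem hφ j)).2.1
      rw [h1]
      have : (φ ^ j * φ) g = (φ ^ j) (φ g) := rfl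
      rw [this, hdspec φ hφ g, map_mul, map_zpow, hφjz, ih g, mul_assoc, ← zpow_add]
      congr 1
      push_cast
      ring
  -- each element of N has its m-th power inner
  have hφm : ∀ φ : MulAut G, φ ∈ N → φ ^ m ∈ R := by
    intro φ hφ
    refine ⟨z ^ (- a φ), ?_⟩
    ext g
    rw [MulAut.conj_apply, hpow φ hφ m g]
    have : (m : ℤ) * d φ g = a φ - (ε g : ℤ) * a φ := hsum φ hφ g
    rw [this]
    calc z ^ (-a φ) * g * (z ^ (-a φ))⁻¹
        = g * (g⁻¹ * z ^ (-a φ) * g) * z ^ (a φ) := by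
          rw [← zpow_neg]
          group
      _ = g * ((g⁻¹ * z * g) ^ (-a φ)) * z ^ (a φ) := by rw [hconjz]
      _ = g * ((z ^ (ε g : ℤ)) ^ (-a φ)) * z ^ (a φ) := by rw [hε g]
      _ = g * z ^ (a φ - (ε g : ℤ) * a φ) := by
          rw [← zpow_mul, mul_assoc, ← zpow_add]
          congr 1
          ring
  -- embed N into a finitely generated abelian group
  let D : ↥N →* Multiplicative ((G ⧸ K) → ℤ) :=
    MonoidHom.mk' (fun φ => Multiplicative.ofAdd (fun q : G ⧸ K => d φ.1 q.out))
      (by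
        intro φ ψ
        apply Multiplicative.toAdd.injective
        funext q
        exact hdadd φ.1 ψ.1 φ.2 ψ.2 q.out)
  have hDinj : Function.Injective D := by
    intro φ ψ h
    have hdeq : ∀ g : G, d φ.1 g = d ψ.1 g := by
      intro g
      have h1 : d φ.1 ((QuotientGroup.mk g : G ⧸ K)).out = d ψ.1 ((QuotientGroup.mk g : G ⧸ K)).out :=
        congrFun (Multiplicative.ofAdd.injective h) _
      have h2 : d φ.1 g = d φ.1 ((QuotientGroup.mk g : G ⧸ K)).out :=
        hdQ φ.1 φ.2 _ _ (by rw [QuotientGroup.out_eq'])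
      have h3 : d ψ.1 g = d ψ.1 ((QuotientGroup.mk g : G ⧸ K)).out :=
        hdQ ψ.1 ψ.2 _ _ (by rw [QuotientGroup.out_eq'])
      rw [h2, h3, h1]
    apply Subtype.ext
    ext g
    rw [hdspec φ.1 φ.2 g, hdspec ψ.1 ψ.2 g, hdeq g]
  haveI hrangeFG : Group.FG ↥D.range := aux_fg D.range
  haveI hNFG : Group.FG ↥N := by
    let e := (MonoidHom.ofInjective hDinj).symm
    exact Group.fg_of_surjective (f := e.toMonoidHom) e.surjective
  letI : CommGroup ↥N :=
    { (inferInstance : Group ↥N) with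
      mul_comm := fun φ ψ => Subtype.ext (hNcomm φ.1 ψ.1 φ.2 ψ.2) }
  set S : Subgroup ↥N := R.subgroupOf N with hS
  haveI hQfin2 : Finite (↥N ⧸ S) := by
    refine CommGroup.finite_of_fg_torsion _ ?_
    intro x
    induction x using QuotientGroup.induction_on with
    | _ φ =>
      refine isOfFinOrder_iff_pow_eq_one.mpr ⟨m, Nat.pos_of_ne_zero hm, ?_⟩
      have : ((φ : ↥N ⧸ S) : ↥N ⧸ S) ^ m = ((φ ^ m : ↥N) : ↥N ⧸ S) := rfl
      rw [this, QuotientGroup.eq_one_iff]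
      show ((φ ^ m : ↥N) : MulAut G) ∈ R
      have hcoe : ((φ ^ m : ↥N) : MulAut G) = (φ : MulAut G) ^ m := rfl
      rw [hcoe]
      exact hφm φ.1 φ.2
  haveI hRN : (R ⊓ N).FiniteIndex := by
    constructor
    rw [← Subgroup.relIndex_mul_index (inf_le_right : R ⊓ N ≤ N)]
    apply Nat.mul_ne_zero
    · rw [Subgroup.inf_relIndex_right]
      show (R.subgroupOf N).index ≠ 0
      rw [Subgroup.index_eq_card]
      exact Nat.card_ne_zero.mpr ⟨inferInstance, hQfin2⟩
    · exact hNfi.index_ne_zero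
  exact Subgroup.finiteIndex_of_le (inf_le_left : R ⊓ N ≤ R)

end Core

open Pointwise in
private lemma smul_normalCore' {G : Type*} [Group G] (φ : MulAut G) (H : Subgroup G) :
    φ • H.normalCore = (φ • H).normalCore := by
  ext x
  rw [Subgroup.mem_pointwise_smul_iff_inv_smul_mem]
  show (∀ b : G, b * (φ⁻¹ • x) * b⁻¹ ∈ H) ↔ (∀ b : G, b * x * b⁻¹ ∈ φ • H)
  constructor
  · intro h b
    rw [Subgroup.mem_pointwise_smul_iff_inv_smul_mem]
    have := h (φ⁻¹ b)
    show φ⁻¹ (b * x * b⁻¹) ∈ H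
    simpa [map_mul, map_inv] using this
  · intro h b
    have := h (φ b)
    rw [Subgroup.mem_pointwise_smul_iff_inv_smul_mem] at this
    show b * φ⁻¹ x * b⁻¹ ∈ H
    have h2 : φ⁻¹ (φ b * x * (φ b)⁻¹) = b * φ⁻¹ x * b⁻¹ := by
      simp [map_mul, map_inv]
    rw [← h2]
    exact this

open Pointwise in
/-- The outer automorphism group `Aut(G)/Inn(G)` of a virtually cyclic group is finite. -/
theorem stmt7 {G : Type*} [Group G]
    (hvc : ∃ C : Subgroup G, IsCyclic C ∧ C.FiniteIndex) :
    Finite (MulAut G ⧸ (MulAut.conj : G →* MulAut G).range) := by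
  classical
  cases finite_or_infinite G with
  | inl hfin =>
    have : Finite (MulAut G) := Finite.of_injective (fun e => (e : G ≃ G))
      (fun a b h => MulEquiv.ext fun x => by
        simpa using congrFun (congrArg (fun q : G ≃ G => q.toFun) h) x)
    exact Quotient.finite _
  | inr hinf =>
    obtain ⟨C, hCcyc, hCfi⟩ := hvc
    suffices h : (MulAut.conj : G →* MulAut G).range.FiniteIndex by
      refine Nat.finite_of_card_ne_zero ?_
      rw [← Subgroup.index_eq_card]
      exact h.index_ne_zero
    -- a generator of C
    obtain ⟨cc, hcc⟩ := hCcyc.exists_generator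
    have hCgen : ∀ x ∈ C, ∃ k : ℤ, (cc : G) ^ k = x := by
      intro x hx
      obtain ⟨k, hk⟩ := Subgroup.mem_zpowers_iff.mp (hcc ⟨x, hx⟩)
      exact ⟨k, by simpa [← SubgroupClass.coe_zpow] using congrArg (Subtype.val) hk⟩
    -- a finite generating set of G
    haveI hQC : Finite (G ⧸ C) := by
      refine Nat.finite_of_card_ne_zero ?_
      rw [← Subgroup.index_eq_card]
      exact hCfi.index_ne_zero
    let T : Set G := Set.range (fun q : G ⧸ C => q.out) ∪ {(cc : G)}
    have hTfin : T.Finite := (Set.finite_range _).union (Set.finite_singleton _)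
    have hTtop : Subgroup.closure T = ⊤ := by
      rw [eq_top_iff]
      intro g _
      obtain ⟨h, hh⟩ := QuotientGroup.mk_out_eq_mul C g
      have hout : (QuotientGroup.mk g : G ⧸ C).out ∈ Subgroup.closure T :=
        Subgroup.subset_closure (Or.inl ⟨QuotientGroup.mk g, rfl⟩)
      have hccT : (cc : G) ∈ Subgroup.closure T :=
        Subgroup.subset_closure (Or.inr rfl)
      obtain ⟨k, hk⟩ := hCgen (h : G) h.2
      have hgeq : g = (QuotientGroup.mk g : G ⧸ C).out * ((cc : G) ^ k)⁻¹ := by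
        rw [hk, hh]; group
      rw [hgeq]
      exact mul_mem hout (inv_mem (zpow_mem hccT k))
    set n := C.index with hn
    have hn0 : n ≠ 0 := hCfi.index_ne_zero
    haveI hfinsub : Finite {H : Subgroup G // H.index = n} :=
      aux_fin_subgroups T hTfin hTtop n hn0
    -- the stabilizer of C in MulAut G
    set A : Subgroup (MulAut G) := MulAction.stabilizer (MulAut G) C with hA
    have horb : MulAction.orbit (MulAut G) C ⊆ {H : Subgroup G | H.index = n} := by
      rintro H ⟨φ, rfl⟩
      show (φ • C).index = n
      rw [index_smul']
    have horbfin : (MulAction.orbit (MulAut G) C).Finite := by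
      refine Set.Finite.subset ?_ horb
      have : Finite {H : Subgroup G | H.index = n} := hfinsub
      exact Set.toFinite _
    haveI hAfi : A.FiniteIndex := by
      constructor
      rw [hA, MulAction.index_stabilizer]
      exact Set.ncard_ne_zero_of_mem (MulAction.mem_orbit_self C) horbfin
    -- the normal core of C
    set K : Subgroup G := C.normalCore with hK
    haveI : K.Normal := Subgroup.normalCore_normal C
    haveI := hCfi
    haveI hKfi : K.FiniteIndex := @Subgroup.finiteIndex_normalCore _ _ C hCfi
    -- K is infinite
    haveI hKinf : Infinite ↥K := by
      by_contra hfinK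
      rw [not_infinite_iff_finite] at hfinK
      have h1 : Nat.card ↥K ≠ 0 := Nat.card_ne_zero.mpr ⟨⟨1⟩, hfinK⟩
      have h2 : Nat.card G ≠ 0 := by
        rw [← Subgroup.card_mul_index K]
        exact Nat.mul_ne_zero h1 hKfi.index_ne_zero
      exact hinf.not_finite (Nat.finite_of_card_ne_zero h2)
    -- a generator of K
    haveI : IsCyclic ↥(K.subgroupOf C) := Subgroup.isCyclic _
    haveI hKcyc : IsCyclic ↥K := by
      have e := Subgroup.subgroupOfEquivOfLe (Subgroup.normalCore_le C)
      exact isCyclic_of_surjective e.toMonoidHom e.surjective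
    obtain ⟨ζ, hζ⟩ := hKcyc.exists_generator
    set z : G := (ζ : G) with hzdef
    have hzK : Subgroup.zpowers z = K := by
      apply le_antisymm
      · rw [Subgroup.zpowers_le]
        exact ζ.2
      · intro x hx
        obtain ⟨k, hk⟩ := Subgroup.mem_zpowers_iff.mp (hζ ⟨x, hx⟩)
        exact Subgroup.mem_zpowers_iff.mpr
          ⟨k, by rw [hzdef, ← SubgroupClass.coe_zpow]; exact congrArg (Subtype.val) hk⟩
    have hz : ¬ IsOfFinOrder z := by
      rw [← orderOf_eq_zero_iff]
      have h1 : Nat.card (Subgroup.zpowers z) = orderOf z := Nat.card_zpowers z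
      rw [hzK] at h1
      rw [← h1]
      exact Nat.card_eq_zero_of_infinite
    -- A stabilizes K
    have hAK : ∀ φ : MulAut G, φ ∈ A → ∀ x : G, x ∈ K → φ x ∈ K := by
      intro φ hφ x hx
      have h1 : φ • K = K := by
        rw [hK, smul_normalCore', hφ]
      rw [← h1]
      exact Subgroup.smul_mem_pointwise_smul x φ K hx
    exact aux_core K z hzK hz A hAK
end

section
/- Let G = A * B be a free product with A and B nontrivial, and let a ∈ A. The automorphism φ_a of G determined by φ_a(x) = a x a⁻¹ for x ∈ A and φ_a(y) = y for y ∈ B is an inner automorphism of G if and only if a lies in the center of A. -/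
set_option linter.unusedSectionVars false

open Monoid CoprodI Word List

namespace Stmt14Aux

variable {ι : Type*} {G : ι → Type*} [∀ i, Group (G i)]

/-- Reversal of a reduced word, inverting each letter. -/
def wrev (w : Word G) : Word G where
  toList := (w.toList.map (fun l => (⟨l.1, l.2⁻¹⟩ : Σ i, G i))).reverse
  ne_one := by
    intro l hl
    rw [List.mem_reverse, List.mem_map] at hl
    obtain ⟨l', hl', rfl⟩ := hl
    exact inv_ne_one.2 (w.ne_one l' hl')
  chain_ne := by
    rw [List.isChain_reverse]
    refine (List.isChain_map _).2 ?_
    exact w.chain_ne.imp fun {a b} h => Ne.symm h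

lemma prod_wrev (w : Word G) : Word.prod (wrev w) = (Word.prod w)⁻¹ := by
  unfold Word.prod
  simp only [wrev]
  rw [List.map_reverse, List.map_map, List.prod_inv_reverse, List.map_map]
  congr 2

variable [DecidableEq ι] [∀ i, DecidableEq (G i)]

lemma prod_equiv (v : CoprodI G) : Word.prod (Word.equiv v) = v :=
  Word.equiv.symm_apply_apply v

lemma equiv_prod (w : Word G) : Word.equiv (Word.prod w) = w :=
  Word.equiv.apply_symm_apply w

lemma equiv_inv (v : CoprodI G) : Word.equiv v⁻¹ = wrev (Word.equiv v) := by
  have h : Word.prod (wrev (Word.equiv v)) = v⁻¹ := by rw [prod_wrev, prod_equiv]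
  rw [← h, equiv_prod]

lemma equiv_mul (x v : CoprodI G) : Word.equiv (x * v) = x • Word.equiv v := by
  have h : ∀ y : CoprodI G, Word.equiv y = y • Word.empty := fun _ => rfl
  rw [h, h, mul_smul]


lemma equiv_of_mul {i : ι} (m : G i) (hm : m ≠ 1) (v : CoprodI G)
    (hv : Word.fstIdx (Word.equiv v) ≠ some i) :
    (Word.equiv (of m * v)).toList = ⟨i, m⟩ :: (Word.equiv v).toList := by
  rw [equiv_mul, ← Word.cons_eq_smul (h1 := hv) (h2 := hm)]
  rfl

lemma getLast?_cons_ne_nil {α : Type*} (a : α) (l : List α) (hl : l ≠ []) :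
    (a :: l).getLast? = l.getLast? := by
  obtain ⟨b, l', rfl⟩ := List.exists_cons_of_ne_nil hl
  exact List.getLast?_cons_cons

lemma getLast?_rcons {i : ι} (p : Word.Pair G i) (hq : p.tail.toList ≠ []) :
    (Word.rcons p).toList.getLast? = p.tail.toList.getLast? := by
  rw [Word.rcons]
  split_ifs with h
  · rfl
  · exact getLast?_cons_ne_nil _ _ hq

lemma getLast?_smul {i : ι} (n : G i) (w : Word G) (hw : w.toList ≠ [])
    (h2 : Word.fstIdx w ≠ some i ∨ w.toList.tail ≠ []) :
    (of n • w).toList.getLast? = w.toList.getLast? := by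
  set p := Word.equivPair i w with hp
  have hw_eq : Word.rcons p = w := by
    rw [hp, ← Word.equivPair_symm, Equiv.symm_apply_apply]
  have hsm : of n • w = Word.rcons ⟨n * p.head, p.tail, p.fstIdx_ne⟩ := Word.of_smul_def i w n
  by_cases hq : p.tail.toList = []
  · exfalso
    rw [Word.rcons] at hw_eq
    split_ifs at hw_eq with h
    · rw [← hw_eq] at hw
      exact hw hq
    · rcases h2 with h2 | h2
      · apply h2
        rw [← hw_eq]
        simp [Word.fstIdx]
      · apply h2
        rw [← hw_eq]
        simp [Word.cons, hq]
  · rw [hsm]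
    rw [getLast?_rcons ⟨n * p.head, p.tail, p.fstIdx_ne⟩ hq, ← hw_eq, getLast?_rcons p hq]

lemma fstIdx_wrev (w : Word G) :
    Word.fstIdx (wrev w) = w.toList.getLast?.map Sigma.fst := by
  show ((w.toList.map (fun l => (⟨l.1, l.2⁻¹⟩ : Σ i, G i))).reverse).head?.map Sigma.fst = _
  rw [List.head?_reverse, List.getLast?_map]
  cases h : w.toList.getLast? <;> simp

lemma getLast?_map_fst_wrev (w : Word G) :
    (wrev w).toList.getLast?.map Sigma.fst = Word.fstIdx w := by
  show ((w.toList.map (fun l => (⟨l.1, l.2⁻¹⟩ : Σ i, G i))).reverse).getLast?.map Sigma.fst = _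
  rw [List.getLast?_reverse, List.head?_map]
  rw [Word.fstIdx]
  cases h : w.toList.head? <;> simp


lemma eq_one_of_fstIdx_ne {i : ι} [Nontrivial (G i)] (v : CoprodI G)
    (hv : Word.fstIdx (Word.equiv v) ≠ some i)
    (hR : ∀ m : G i, ∃ m' : G i, v * of m = of m' * v) : v = 1 := by
  by_cases ht : (Word.equiv v).toList = []
  · have h0 : Word.equiv v = Word.empty := Word.ext ht
    have h1 := prod_equiv v
    rw [h0, Word.prod_empty] at h1
    exact h1.symm
  · exfalso
    obtain ⟨m, hm⟩ := exists_ne (1 : G i)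
    obtain ⟨m', hm'⟩ := hR m
    have hm'1 : m' ≠ 1 := by
      rintro rfl
      rw [map_one, one_mul] at hm'
      have h5 : v * of m = v * 1 := by rw [mul_one]; exact hm'
      exact hm (of_injective i (by rw [mul_left_cancel h5, map_one]))
    have hRfst : Word.fstIdx (Word.equiv (of m' * v)) = some i := by
      rw [Word.fstIdx, equiv_of_mul m' hm'1 v hv]
      rfl
    set t := Word.equiv v with htdef
    have hLfst : Word.fstIdx (Word.equiv (v * of m)) = Word.fstIdx t := by
      have h1 : v * of m = (of m⁻¹ * v⁻¹)⁻¹ := by simp [mul_inv_rev]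
      rw [h1, equiv_inv, fstIdx_wrev, equiv_mul, equiv_inv, ← htdef]
      rw [getLast?_smul m⁻¹ (wrev t) ?hne ?h2]
      · exact getLast?_map_fst_wrev t
      case hne => simp [wrev, ht]
      case h2 =>
        by_cases hfi : Word.fstIdx (wrev t) = some i
        · right
          rcases hl : t.toList with _ | ⟨l, _ | ⟨l', rest⟩⟩
          · exact absurd hl ht
          · exfalso
            apply hv
            rw [Word.fstIdx, hl]
            rw [Word.fstIdx] at hfi
            simp only [wrev, hl] at hfi
            simpa using hfi
          · intro hcon
            have hlen : (wrev t).toList.length = t.toList.length := by simp [wrev]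
            have h4 := congrArg List.length hcon
            rw [List.length_tail, hlen, hl] at h4
            simp at h4
        · left
          exact hfi
    rw [hm', hRfst] at hLfst
    exact hv hLfst.symm

lemma exists_of_commute {i : ι} [Nontrivial (G i)] (u : CoprodI G)
    (hu : ∀ m : G i, u * of m = of m * u) : ∃ d : G i, u = of d := by
  set p := Word.equivPair i (Word.equiv u) with hp
  have hw_eq : Word.rcons p = Word.equiv u := by
    rw [hp, ← Word.equivPair_symm, Equiv.symm_apply_apply]
  have h1 : of p.head * Word.prod p.tail = u := by
    rw [← Word.prod_rcons, hw_eq, prod_equiv]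
  set v := Word.prod p.tail with hv
  have hvfst : Word.fstIdx (Word.equiv v) ≠ some i := by
    rw [hv, equiv_prod]
    exact p.fstIdx_ne
  have hR : ∀ m : G i, ∃ m' : G i, v * of m = of m' * v := by
    intro m
    refine ⟨p.head⁻¹ * m * p.head, ?_⟩
    have hveq : v = (of p.head)⁻¹ * u := by rw [← h1]; group
    rw [hveq]
    rw [mul_assoc, hu m]
    simp [map_mul, mul_assoc]
  have hv1 : v = 1 := eq_one_of_fstIdx_ne v hvfst hR
  exact ⟨p.head, by rw [← h1, hv1, mul_one]⟩


end Stmt14Aux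

namespace Stmt14Aux

universe u v

variable {A : Type u} {B : Type v} [Group A] [Group B]

/-- The `Bool`-indexed family with value `ULift A` at `true` and `ULift B` at `false`. -/
@[reducible] def boolFam (A : Type u) (B : Type v) : Bool → Type (max u v) :=
  fun b => cond b (ULift.{v} A) (ULift.{u} B)

instance : ∀ b, Group (boolFam A B b)
  | true => inferInstanceAs (Group (ULift A))
  | false => inferInstanceAs (Group (ULift B))

instance [Nontrivial A] : Nontrivial (boolFam A B true) :=
  inferInstanceAs (Nontrivial (ULift A))
instance [Nontrivial B] : Nontrivial (boolFam A B false) :=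
  inferInstanceAs (Nontrivial (ULift B))

/-- The canonical map `A ∗ B →* CoprodI (boolFam A B)`. -/
def toCoprodI : Monoid.Coprod A B →* Monoid.CoprodI (boolFam A B) :=
  Monoid.Coprod.lift
    ((Monoid.CoprodI.of (i := true)).comp (MulEquiv.ulift.symm : A ≃* ULift A).toMonoidHom)
    ((Monoid.CoprodI.of (i := false)).comp (MulEquiv.ulift.symm : B ≃* ULift B).toMonoidHom)

/-- The canonical map backwards. -/
def ofCoprodI : Monoid.CoprodI (boolFam A B) →* Monoid.Coprod A B :=
  Monoid.CoprodI.lift (fun b => Bool.rec (motive := fun b => boolFam A B b →* Monoid.Coprod A B)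
    (Monoid.Coprod.inr.comp (MulEquiv.ulift : ULift B ≃* B).toMonoidHom)
    (Monoid.Coprod.inl.comp (MulEquiv.ulift : ULift A ≃* A).toMonoidHom) b)

lemma toCoprodI_inl (x : A) :
    toCoprodI (B := B) (Monoid.Coprod.inl x) = Monoid.CoprodI.of (i := true) (ULift.up x) :=
  Monoid.Coprod.lift_apply_inl _ _ x

lemma toCoprodI_inr (y : B) :
    toCoprodI (A := A) (Monoid.Coprod.inr y) = Monoid.CoprodI.of (i := false) (ULift.up y) :=
  Monoid.Coprod.lift_apply_inr _ _ y

lemma toCoprodI_injective : Function.Injective (toCoprodI (A := A) (B := B)) := by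
  have h : (ofCoprodI (A := A) (B := B)).comp toCoprodI = MonoidHom.id _ := by
    apply Monoid.Coprod.hom_ext
    · ext x
      simp only [MonoidHom.comp_apply, MonoidHom.id_comp, MonoidHom.id_apply]
      rw [toCoprodI_inl, ofCoprodI, Monoid.CoprodI.lift_of]
      rfl
    · ext y
      simp only [MonoidHom.comp_apply, MonoidHom.id_comp, MonoidHom.id_apply]
      rw [toCoprodI_inr, ofCoprodI, Monoid.CoprodI.lift_of]
      rfl
  intro x y hxy
  have h2 := congrArg ofCoprodI hxy
  have h3 : ∀ z, ofCoprodI (toCoprodI (A := A) (B := B) z) = z := fun z => by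
    have := DFunLike.congr_fun h z
    simpa using this
  rw [h3, h3] at h2
  exact h2

end Stmt14Aux


/-- The automorphism of `A * B` which is conjugation by `a` on `A` and the identity on `B`. -/
def partialConj {A B : Type*} [Group A] [Group B] (a : A) :
    Monoid.Coprod A B →* Monoid.Coprod A B :=
  Monoid.Coprod.lift
    ((Monoid.Coprod.inl : A →* Monoid.Coprod A B).comp (MulAut.conj a).toMonoidHom)
    (Monoid.Coprod.inr : B →* Monoid.Coprod A B)

/-- In a free product `A * B` of nontrivial groups, the automorphism which is conjugation by
`a ∈ A` on `A` and the identity on `B` is inner if and only if `a` is central in `A`. -/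
theorem stmt14 {A B : Type*} [Group A] [Group B] [Nontrivial A] [Nontrivial B] (a : A) :
    (∃ g : Monoid.Coprod A B, ∀ x : Monoid.Coprod A B, partialConj (B := B) a x = g * x * g⁻¹)
      ↔ a ∈ Subgroup.center A := by
  constructor
  · rintro ⟨g, hg⟩
    letI : ∀ b, DecidableEq (Stmt14Aux.boolFam A B b) := fun b => Classical.decEq _
    have hB : ∀ y : B, g * Monoid.Coprod.inr y = Monoid.Coprod.inr y * g := by
      intro y
      have h := hg (Monoid.Coprod.inr y)
      rw [partialConj, Monoid.Coprod.lift_apply_inr] at h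
      have h2 : Monoid.Coprod.inr y * g = g * Monoid.Coprod.inr y := by
        conv_lhs => rw [h]
        group
      exact h2.symm
    have hA : ∀ x : A, (g⁻¹ * Monoid.Coprod.inl a) * Monoid.Coprod.inl x
        = Monoid.Coprod.inl x * (g⁻¹ * Monoid.Coprod.inl a) := by
      intro x
      have h := hg (Monoid.Coprod.inl x)
      rw [partialConj, Monoid.Coprod.lift_apply_inl] at h
      simp only [MonoidHom.comp_apply, MulEquiv.coe_toMonoidHom, MulAut.conj_apply] at h
      have key : g⁻¹ * Monoid.Coprod.inl (a * x * a⁻¹) * g = Monoid.Coprod.inl x := by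
        rw [h]; group
      have expand : Monoid.Coprod.inl (a * x * a⁻¹)
          = Monoid.Coprod.inl a * Monoid.Coprod.inl x * (Monoid.Coprod.inl a : Monoid.Coprod A B)⁻¹ := by
        simp [map_mul]
      rw [expand] at key
      calc g⁻¹ * Monoid.Coprod.inl a * Monoid.Coprod.inl x
          = (g⁻¹ * (Monoid.Coprod.inl a * Monoid.Coprod.inl x * (Monoid.Coprod.inl a)⁻¹) * g)
              * (g⁻¹ * Monoid.Coprod.inl a) := by group
        _ = Monoid.Coprod.inl x * (g⁻¹ * Monoid.Coprod.inl a) := by rw [key]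
    have hEA : ∀ m : Stmt14Aux.boolFam A B true,
        Stmt14Aux.toCoprodI (g⁻¹ * Monoid.Coprod.inl a) * Monoid.CoprodI.of m
          = Monoid.CoprodI.of m * Stmt14Aux.toCoprodI (g⁻¹ * Monoid.Coprod.inl a) := by
      intro m
      have h := congrArg Stmt14Aux.toCoprodI (hA m.down)
      simp [map_mul, Stmt14Aux.toCoprodI_inl] at h ⊢
      exact h
    obtain ⟨d, hd⟩ := @Stmt14Aux.exists_of_commute Bool (Stmt14Aux.boolFam A B) _ instDecidableEqBool (fun b => Classical.decEq _) true _ _ hEA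
    have hEB : ∀ m : Stmt14Aux.boolFam A B false,
        Stmt14Aux.toCoprodI (A := A) g * Monoid.CoprodI.of m
          = Monoid.CoprodI.of m * Stmt14Aux.toCoprodI g := by
      intro m
      have h := congrArg Stmt14Aux.toCoprodI (hB m.down)
      simp [map_mul, Stmt14Aux.toCoprodI_inr] at h
      exact h
    obtain ⟨c, hc⟩ := @Stmt14Aux.exists_of_commute Bool (Stmt14Aux.boolFam A B) _ instDecidableEqBool (fun b => Classical.decEq _) false _ _ hEB
    have hhd : g⁻¹ * Monoid.Coprod.inl a = Monoid.Coprod.inl d.down := by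
      apply Stmt14Aux.toCoprodI_injective
      rw [hd, Stmt14Aux.toCoprodI_inl]
      congr
    have hgc : g = Monoid.Coprod.inr c.down := by
      apply Stmt14Aux.toCoprodI_injective
      rw [hc, Stmt14Aux.toCoprodI_inr]
      congr
    have hinla : Monoid.Coprod.inl a = Monoid.Coprod.inr c.down * Monoid.Coprod.inl d.down := by
      rw [← hgc, ← hhd]; group
    have had : a = d.down := by
      have h := congrArg Monoid.Coprod.fst hinla
      simpa using h
    rw [Subgroup.mem_center_iff]
    intro x
    have h4 := hA x
    rw [hhd, ← had] at h4
    have h5 : (Monoid.Coprod.inl (a * x) : Monoid.Coprod A B) = Monoid.Coprod.inl (x * a) := by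
      simpa [map_mul] using h4
    exact (Monoid.Coprod.inl_injective h5).symm
  · intro ha
    refine ⟨1, fun x => ?_⟩
    rw [one_mul, inv_one, mul_one]
    have h : partialConj (B := B) a = MonoidHom.id _ := by
      apply Monoid.Coprod.hom_ext
      · ext z
        simp only [partialConj, MonoidHom.comp_apply, Monoid.Coprod.lift_comp_inl,
          MonoidHom.id_comp, MulEquiv.coe_toMonoidHom, MulAut.conj_apply, MonoidHom.id_apply]
        rw [show a * z = z * a from (Subgroup.mem_center_iff.mp ha z).symm]
        simp
      · ext z
        simp [partialConj]
    rw [h]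
    rfl
end

section
/- Let A be a nontrivial group and G = A * ℤ the free product of A with an infinite cyclic group generated by t. For a ∈ A let ψ_a ∈ Aut(G) be the automorphism with ψ_a(x) = x for x ∈ A and ψ_a(t) = a t. Then ψ_a is inner if and only if a = 1; consequently a ↦ [ψ_a] induces an injection of A (as a set) into Out(G), and Out(A * ℤ) is infinite whenever A is infinite. -/
/-- The endomorphism of `A * ℤ` which is the identity on `A` and sends the generator `t`
of `ℤ` to `a * t`. -/
def twistByA {A : Type*} [Group A] (a : A) :
    Monoid.Coprod A (Multiplicative ℤ) →* Monoid.Coprod A (Multiplicative ℤ) :=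
  Monoid.Coprod.lift (Monoid.Coprod.inl : A →* Monoid.Coprod A (Multiplicative ℤ))
    (zpowersHom (Monoid.Coprod A (Multiplicative ℤ))
      (Monoid.Coprod.inl a * Monoid.Coprod.inr (Multiplicative.ofAdd 1)))

namespace TwistAux

variable {A : Type*} [Group A]

/-- The retraction `A ∗ ℤ →* A` which is the identity on `A` and kills `t`. -/
def retr : Monoid.Coprod A (Multiplicative ℤ) →* A :=
  Monoid.Coprod.lift (MonoidHom.id A) 1

@[simp] lemma retr_inl (x : A) : retr (Monoid.Coprod.inl x) = x :=
  Monoid.Coprod.lift_apply_inl _ _ x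

@[simp] lemma retr_inr (n : Multiplicative ℤ) :
    retr (Monoid.Coprod.inr n : Monoid.Coprod A (Multiplicative ℤ)) = 1 :=
  Monoid.Coprod.lift_apply_inr _ _ n

@[simp] lemma twist_inl (a x : A) : twistByA a (Monoid.Coprod.inl x) = Monoid.Coprod.inl x :=
  Monoid.Coprod.lift_apply_inl _ _ x

@[simp] lemma twist_inr_one (a : A) :
    twistByA a (Monoid.Coprod.inr (Multiplicative.ofAdd 1)) =
      Monoid.Coprod.inl a * Monoid.Coprod.inr (Multiplicative.ofAdd 1) := by
  rw [twistByA, Monoid.Coprod.lift_apply_inr, zpowersHom_apply]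
  simp

lemma twist_comp (a b : A) : (twistByA a).comp (twistByA b) = twistByA (b * a) := by
  apply Monoid.Coprod.hom_ext
  · ext x; simp
  · apply MonoidHom.ext_mint
    show twistByA a (twistByA b (Monoid.Coprod.inr (Multiplicative.ofAdd 1))) =
      twistByA (b * a) (Monoid.Coprod.inr (Multiplicative.ofAdd 1))
    rw [twist_inr_one, map_mul, twist_inl, twist_inr_one, twist_inr_one, ← mul_assoc, ← map_mul]

lemma twist_one : twistByA (1 : A) = MonoidHom.id _ := by
  apply Monoid.Coprod.hom_ext
  · ext x; simp
  · apply MonoidHom.ext_mint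
    show twistByA (1 : A) (Monoid.Coprod.inr (Multiplicative.ofAdd 1)) =
      Monoid.Coprod.inr (Multiplicative.ofAdd 1)
    rw [twist_inr_one]; simp

/-- `twistByA a` as a `MulAut`. -/
def twistEquiv (a : A) : MulAut (Monoid.Coprod A (Multiplicative ℤ)) :=
  { toFun := twistByA a
    invFun := twistByA a⁻¹
    left_inv := fun x => by
      have : (twistByA a⁻¹).comp (twistByA a) = MonoidHom.id _ := by
        rw [twist_comp, mul_inv_cancel, twist_one]
      exact DFunLike.congr_fun this x
    right_inv := fun x => by
      have : (twistByA a).comp (twistByA a⁻¹) = MonoidHom.id _ := by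
        rw [twist_comp, inv_mul_cancel, twist_one]
      exact DFunLike.congr_fun this x
    map_mul' := map_mul _ }

lemma key {a b : A}
    (h : ∃ g : Monoid.Coprod A (Multiplicative ℤ),
      ∀ x, twistByA a x = g * twistByA b x * g⁻¹) : a = b := by
  obtain ⟨g, hg⟩ := h
  -- conjugation fixes inl A pointwise under retraction: retr g is central in A
  have hc : ∀ c : A, c = retr g * c * (retr g)⁻¹ := by
    intro c
    have := hg (Monoid.Coprod.inl c)
    have := congrArg retr this
    simpa using this
  have ht := congrArg retr (hg (Monoid.Coprod.inr (Multiplicative.ofAdd 1)))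
  simp only [map_mul, map_inv, twist_inr_one, retr_inl, retr_inr, mul_one] at ht
  rw [ht]
  exact (hc b).symm

end TwistAux

/-- Let `G = A * ℤ` with `A` nontrivial and let `ψ_a` be the automorphism which is the
identity on `A` and sends the generator `t` to `a t`. Then `ψ_a` is inner iff `a = 1`;
the map `a ↦ [ψ_a]` is injective into `Out(G)`; and `Out(A * ℤ)` is infinite whenever `A`
is infinite. -/
theorem stmt15 {A : Type*} [Group A] [Nontrivial A] :
    (∀ a : A, (∃ g : Monoid.Coprod A (Multiplicative ℤ),
        ∀ x, twistByA a x = g * x * g⁻¹) ↔ a = 1) ∧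
    (∀ a b : A, (∃ g : Monoid.Coprod A (Multiplicative ℤ),
        ∀ x, twistByA a x = g * twistByA b x * g⁻¹) → a = b) ∧
    (Infinite A →
      Infinite (MulAut (Monoid.Coprod A (Multiplicative ℤ)) ⧸
        (MulAut.conj : Monoid.Coprod A (Multiplicative ℤ) →*
          MulAut (Monoid.Coprod A (Multiplicative ℤ))).range)) := by
  open TwistAux in
  refine ⟨?_, fun a b => key, ?_⟩
  · intro a
    constructor
    · intro ⟨g, hg⟩
      refine key ⟨g, fun x => ?_⟩
      rw [twist_one]
      exact hg x
    · rintro rfl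
      exact ⟨1, fun x => by rw [twist_one]; simp⟩
  · intro hA
    refine Infinite.of_injective
      (fun a : A => QuotientGroup.mk (twistEquiv a)) (fun a b hab => ?_)
    rw [QuotientGroup.eq] at hab
    obtain ⟨g, hg⟩ := hab
    -- (twistEquiv a)⁻¹ * twistEquiv b = conj g
    refine (key (a := b) (b := a) ⟨twistByA a g, fun x => ?_⟩).symm
    have h1 : twistEquiv b x = (twistEquiv a * MulAut.conj g) x := by
      rw [hg]; simp [← mul_assoc]
    have h2 : (twistEquiv a * MulAut.conj g) x = twistByA a (g * x * g⁻¹) := rfl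
    have : twistByA b x = twistByA a (g * x * g⁻¹) := h1.trans h2
    rw [this]
    simp [mul_assoc]
end
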